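/- arXiv:2506.19025 — 2 statements merged into one kernel-verified Lean document; each statement's English description precedes it below -/
import Mathlib

section
/- Let φ : ℝ^d → ℝ be a differentiable strictly convex function, let P be a probability measure on ℝ^d, and suppose Q = (∇φ₀)_#P for a differentiable convex function φ₀ with T₀ = ∇φ₀. Then the semi-dual excess satisfies S_{P,Q}(φ) − S_{P,Q}(φ₀) = ∫ [φ*(T₀(x)) − φ*(∇φ(x)) − ⟨x, T₀(x) − ∇φ(x)⟩] dP(x), where S_{P,Q}(ψ) = ∫ ψ dP + ∫ ψ* dQ and ψ* is the Fenchel conjugate. -/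
open MeasureTheory RealInnerProductSpace

variable {d : ℕ}

/-- The Fenchel conjugate `φ*(y) = sup_x [⟨x,y⟩ − φ(x)]`. -/
noncomputable def fenchel (φ : EuclideanSpace ℝ (Fin d) → ℝ) (y : EuclideanSpace ℝ (Fin d)) : ℝ :=
  ⨆ x : EuclideanSpace ℝ (Fin d), (⟪x, y⟫ - φ x)

/-- The semi-dual functional `S_{P,Q}(φ) = ∫ φ dP + ∫ φ* dQ`. -/
noncomputable def semiDual (P Q : Measure (EuclideanSpace ℝ (Fin d)))
    (φ : EuclideanSpace ℝ (Fin d) → ℝ) : ℝ :=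
  ∫ x, φ x ∂P + ∫ y, fenchel φ y ∂Q

/-- gradient inequality for convex differentiable functions -/
lemma grad_ineq (φ : EuclideanSpace ℝ (Fin d) → ℝ) (hd : Differentiable ℝ φ)
    (hc : ConvexOn ℝ Set.univ φ) (x z : EuclideanSpace ℝ (Fin d)) :
    φ x + ⟪gradient φ x, z - x⟫ ≤ φ z := by
  set g : ℝ → ℝ := fun t => φ (x + t • (z - x)) with hg
  have hline : ∀ t : ℝ, HasDerivAt (fun s : ℝ => x + s • (z - x)) (z - x) t := by
    intro t
    simpa using ((hasDerivAt_id t).smul_const (z - x)).const_add x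
  have hgd : ∀ t : ℝ, HasDerivAt g (fderiv ℝ φ (x + t • (z - x)) (z - x)) t := by
    intro t
    exact ((hd (x + t • (z - x))).hasFDerivAt).comp_hasDerivAt t (hline t)
  have hgc : ConvexOn ℝ Set.univ g := by
    have h := hc.comp_affineMap (AffineMap.lineMap x z)
    have heq : g = φ ∘ (AffineMap.lineMap x z) := by
      ext t
      simp only [hg, Function.comp_apply, AffineMap.lineMap_apply, vsub_eq_sub, vadd_eq_add]
      congr 1
      abel
    have hset : (⇑(AffineMap.lineMap x z) ⁻¹' Set.univ : Set ℝ) = Set.univ := by simp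
    rw [heq]
    rwa [hset] at h
  have h01 : (0:ℝ) < 1 := one_pos
  have hslope := hgc.deriv_le_slope (Set.mem_univ 0) (Set.mem_univ 1) h01
    ((hgd 0).differentiableAt)
  rw [(hgd 0).deriv] at hslope
  have hval : ⟪gradient φ x, z - x⟫ = fderiv ℝ φ x (z - x) := by
    rw [gradient]
    exact InnerProductSpace.toDual_symm_apply
  have hg0 : g 0 = φ x := by simp [hg]
  have hg1 : g 1 = φ z := by simp [hg]
  have : slope g 0 1 = φ z - φ x := by
    simp [slope, hg0, hg1]
  rw [this] at hslope
  simp only [zero_smul, add_zero] at hslope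
  linarith [hval ▸ hslope]

lemma fenchel_grad (φ : EuclideanSpace ℝ (Fin d) → ℝ) (hd : Differentiable ℝ φ)
    (hc : ConvexOn ℝ Set.univ φ) (x : EuclideanSpace ℝ (Fin d)) :
    fenchel φ (gradient φ x) = ⟪x, gradient φ x⟫ - φ x := by
  have key : ∀ z : EuclideanSpace ℝ (Fin d),
      ⟪z, gradient φ x⟫ - φ z ≤ ⟪x, gradient φ x⟫ - φ x := by
    intro z
    have := grad_ineq φ hd hc x z
    have h1 : ⟪gradient φ x, z - x⟫ = ⟪z, gradient φ x⟫ - ⟪x, gradient φ x⟫ := by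
      rw [real_inner_comm]
      simp [inner_sub_left]
    linarith [h1 ▸ this]
  refine le_antisymm (ciSup_le key) ?_
  exact le_ciSup ⟨_, Set.forall_mem_range.2 key⟩ x

/-- Bregman-divergence identity for the semi-dual excess: if `φ` is differentiable and strictly
convex, `φ₀` is differentiable and convex, and `Q = (∇φ₀)_# P` with `T₀ = ∇φ₀`, then
`S_{P,Q}(φ) − S_{P,Q}(φ₀) = ∫ [φ*(T₀(x)) − φ*(∇φ(x)) − ⟨x, T₀(x) − ∇φ(x)⟩] dP(x)`. -/
theorem semiDual_excess_eq_bregman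
    (P Q : Measure (EuclideanSpace ℝ (Fin d)))
    [IsProbabilityMeasure P] [IsProbabilityMeasure Q]
    (φ φ₀ : EuclideanSpace ℝ (Fin d) → ℝ)
    (hφ_diff : Differentiable ℝ φ)
    (hφ_sconvex : StrictConvexOn ℝ Set.univ φ)
    (hφ₀_diff : Differentiable ℝ φ₀)
    (hφ₀_convex : ConvexOn ℝ Set.univ φ₀)
    (hpush : Measure.map (gradient φ₀) P = Q)
    (hint_φ : Integrable φ P)
    (hint_φ₀ : Integrable φ₀ P)
    (hint_φstar : Integrable (fenchel φ) Q)
    (hint_φ₀star : Integrable (fenchel φ₀) Q)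
    (hint_breg : Integrable (fun x =>
      fenchel φ (gradient φ₀ x) - fenchel φ (gradient φ x)
        - ⟪x, gradient φ₀ x - gradient φ x⟫) P) :
    semiDual P Q φ - semiDual P Q φ₀ =
      ∫ x, (fenchel φ (gradient φ₀ x) - fenchel φ (gradient φ x)
        - ⟪x, gradient φ₀ x - gradient φ x⟫) ∂P := by
  have hφ_convex : ConvexOn ℝ Set.univ φ := hφ_sconvex.convexOn
  have hmeas : Measurable (gradient φ₀) := by
    have : gradient φ₀ = fun x =>
        (InnerProductSpace.toDual ℝ (EuclideanSpace ℝ (Fin d))).symm (fderiv ℝ φ₀ x) := rfl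
    rw [this]
    exact ((InnerProductSpace.toDual ℝ _).symm.continuous.measurable).comp
      (measurable_fderiv ℝ φ₀)
  subst hpush
  have hmapφ : ∫ y, fenchel φ y ∂(Measure.map (gradient φ₀) P)
      = ∫ x, fenchel φ (gradient φ₀ x) ∂P :=
    integral_map hmeas.aemeasurable hint_φstar.aestronglyMeasurable
  have hmapφ₀ : ∫ y, fenchel φ₀ y ∂(Measure.map (gradient φ₀) P)
      = ∫ x, fenchel φ₀ (gradient φ₀ x) ∂P :=
    integral_map hmeas.aemeasurable hint_φ₀star.aestronglyMeasurable
  have hA : Integrable (fun x => fenchel φ (gradient φ₀ x)) P :=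
    (integrable_map_measure hint_φstar.aestronglyMeasurable hmeas.aemeasurable).mp hint_φstar
  have hB0 : Integrable (fun x => fenchel φ₀ (gradient φ₀ x)) P :=
    (integrable_map_measure hint_φ₀star.aestronglyMeasurable hmeas.aemeasurable).mp hint_φ₀star
  have hRHS : ∫ x, (fenchel φ (gradient φ₀ x) - fenchel φ (gradient φ x)
        - ⟪x, gradient φ₀ x - gradient φ x⟫) ∂P
      = ∫ x, ((fenchel φ (gradient φ₀ x) - fenchel φ₀ (gradient φ₀ x)) + (φ x - φ₀ x)) ∂P := by
    apply integral_congr_ae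
    filter_upwards with x
    rw [fenchel_grad φ hφ_diff hφ_convex x, fenchel_grad φ₀ hφ₀_diff hφ₀_convex x,
      inner_sub_right]
    ring
  have hA2 : Integrable (fun x => fenchel φ (gradient φ₀ x) - fenchel φ₀ (gradient φ₀ x)) P :=
    hA.sub hB0
  have hC2 : Integrable (fun x => φ x - φ₀ x) P := hint_φ.sub hint_φ₀
  rw [hRHS, integral_add hA2 hC2, integral_sub hA hB0, integral_sub hint_φ hint_φ₀]
  simp only [semiDual, hmapφ, hmapφ₀]
  ring
end

section
/- Let T : ℝ → ℝ be a monotone nondecreasing map pushing P forward onto Q, where P is atomless. Then T agrees P-almost everywhere with the map x ↦ F_Q⁻¹(F_P(x)). In particular, the monotone transport map between an atomless P and any Q on ℝ is P-a.e. unique. -/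
open MeasureTheory ProbabilityTheory

/-- The generalized quantile function of a measure `Q` on `ℝ`:
`F_Q⁻¹(u) = inf {y | F_Q(y) ≥ u}`. -/
noncomputable def quantile (Q : Measure ℝ) (u : ℝ) : ℝ :=
  sInf {y : ℝ | u ≤ cdf Q y}

open Set Filter Topology

/-- For an atomless measure, the left limit of the cdf equals the cdf. -/
lemma leftLim_cdf_eq (P : Measure ℝ) [IsProbabilityMeasure P]
    (hP : ∀ x : ℝ, P {x} = 0) (x : ℝ) :
    Function.leftLim (cdf P) x = cdf P x := by
  have h := (cdf P).measure_singleton x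
  rw [measure_cdf, hP x] at h
  have h' : cdf P x - Function.leftLim (cdf P) x ≤ 0 := by
    by_contra hcon
    push_neg at hcon
    rw [eq_comm, ENNReal.ofReal_eq_zero] at h
    linarith
  have h'' : Function.leftLim (cdf P) x ≤ cdf P x :=
    (monotone_cdf P).leftLim_le le_rfl
  linarith

/-- Level sets of the cdf of an atomless probability measure are null. -/
lemma cdf_level_null (P : Measure ℝ) [IsProbabilityMeasure P]
    (hP : ∀ x : ℝ, P {x} = 0) (c : ℝ) :
    P {x | cdf P x = c} = 0 := by
  set I : Set ℝ := {x | cdf P x = c} with hI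
  rcases I.eq_empty_or_nonempty with hIe | ⟨x0, hx0⟩
  · rw [hIe]; exact measure_empty
  have hx0' : cdf P x0 = c := hx0
  have hmono : Monotone (cdf P) := monotone_cdf P
  -- If I is bounded below, the cdf at its infimum equals c.
  have hinf : BddBelow I → cdf P (sInf I) = c := by
    intro hbdd
    have h1 : cdf P (sInf I) ≤ c := hx0' ▸ hmono (csInf_le hbdd hx0)
    have h2 : c ≤ cdf P (sInf I) := by
      have hev : ∀ᶠ y in 𝓝[>] (sInf I), c ≤ cdf P y := by
        filter_upwards [self_mem_nhdsWithin] with y hy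
        obtain ⟨z, hzI, hz⟩ := exists_lt_of_csInf_lt ⟨x0, hx0⟩ hy
        exact (hzI : cdf P z = c) ▸ hmono hz.le
      have htend : Filter.Tendsto (cdf P) (𝓝[>] (sInf I)) (𝓝 (cdf P (sInf I))) :=
        ((cdf P).right_continuous (sInf I)).tendsto.mono_left
          (nhdsWithin_mono _ Ioi_subset_Ici_self)
      exact ge_of_tendsto htend hev
    linarith
  -- If I is bounded above, the cdf at its supremum equals c.
  have hsup : BddAbove I → cdf P (sSup I) = c := by
    intro hbdd
    have h1 : c ≤ cdf P (sSup I) := hx0' ▸ hmono (le_csSup hbdd hx0)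
    have h2 : cdf P (sSup I) ≤ c := by
      rw [← leftLim_cdf_eq P hP]
      have hev : ∀ᶠ y in 𝓝[<] (sSup I), cdf P y ≤ c := by
        filter_upwards [self_mem_nhdsWithin] with y hy
        obtain ⟨z, hzI, hz⟩ := exists_lt_of_lt_csSup ⟨x0, hx0⟩ hy
        exact (hzI : cdf P z = c) ▸ hmono hz.le
      exact le_of_tendsto (hmono.tendsto_leftLim (sSup I)) hev
    linarith
  by_cases hbb : BddBelow I
  · by_cases hba : BddAbove I
    · -- bounded case : I ⊆ Icc (sInf I) (sSup I), which has measure c - c = 0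
      refine measure_mono_null (fun x hx => ?_) (?_ : P (Icc (sInf I) (sSup I)) = 0)
      · exact ⟨csInf_le hbb hx, le_csSup hba hx⟩
      · have := (cdf P).measure_Icc (sInf I) (sSup I)
        rw [measure_cdf] at this
        rw [this, leftLim_cdf_eq P hP, hinf hbb, hsup hba, sub_self,
          ENNReal.ofReal_zero]
    · -- unbounded above : c ≥ 1, I ⊆ Ici (sInf I) of measure 1 - c ≤ 0
      have hc1 : (1 : ℝ) ≤ c := by
        have hev : ∀ᶠ y in atTop, cdf P y ≤ c := by
          filter_upwards [eventually_ge_atTop (0:ℝ)] with y _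
          obtain ⟨z, hzI, hz⟩ := not_bddAbove_iff.1 hba y
          exact (hzI : cdf P z = c) ▸ hmono hz.le
        exact le_of_tendsto (tendsto_cdf_atTop P) hev
      refine measure_mono_null (fun x hx => csInf_le hbb hx)
        (?_ : P (Ici (sInf I)) = 0)
      have := (cdf P).measure_Ici (tendsto_cdf_atTop P) (sInf I)
      rw [measure_cdf] at this
      rw [this, leftLim_cdf_eq P hP, hinf hbb, ENNReal.ofReal_eq_zero]
      linarith
  · -- unbounded below : c ≤ 0
    have hc0 : c ≤ 0 := by
      have hev : ∀ᶠ y in atBot, c ≤ cdf P y := by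
        filter_upwards [eventually_le_atBot (0:ℝ)] with y _
        obtain ⟨z, hzI, hz⟩ := not_bddBelow_iff.1 hbb y
        exact (hzI : cdf P z = c) ▸ hmono hz.le
      exact ge_of_tendsto (tendsto_cdf_atBot P) hev
    by_cases hba : BddAbove I
    · refine measure_mono_null (fun x hx => le_csSup hba hx)
        (?_ : P (Iic (sSup I)) = 0)
      have := (cdf P).measure_Iic (tendsto_cdf_atBot P) (sSup I)
      rw [measure_cdf] at this
      rw [this, hsup hba, sub_zero, ENNReal.ofReal_eq_zero]
      linarith
    · -- both unbounded : contradiction since then c ≥ 1 and c ≤ 0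
      exfalso
      have hc1 : (1 : ℝ) ≤ c := by
        have hev : ∀ᶠ y in atTop, cdf P y ≤ c := by
          filter_upwards [eventually_ge_atTop (0:ℝ)] with y _
          obtain ⟨z, hzI, hz⟩ := not_bddAbove_iff.1 hba y
          exact (hzI : cdf P z = c) ▸ hmono hz.le
        exact le_of_tendsto (tendsto_cdf_atTop P) hev
      linarith

/-- A monotone nondecreasing map `T` pushing an atomless probability measure `P` on `ℝ`
forward onto `Q` agrees `P`-almost everywhere with `x ↦ F_Q⁻¹(F_P(x))`; in particular the
monotone transport map from `P` to `Q` is `P`-a.e. unique. -/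
theorem monotone_transport_map_ae_unique
    (P Q : Measure ℝ) [IsProbabilityMeasure P] [IsProbabilityMeasure Q]
    (hP_atomless : ∀ x : ℝ, P {x} = 0)
    (T : ℝ → ℝ) (hT_mono : Monotone T) (hT_push : Measure.map T P = Q) :
    ∀ᵐ x ∂P, T x = quantile Q (cdf P x) := by
  have hT_meas : Measurable T := hT_mono.measurable
  -- the exceptional null set
  set N : Set ℝ := {x | cdf P x = 0} ∪ {x | cdf P x = 1} ∪
    ⋃ q : ℚ, {x | cdf P x = cdf Q (q : ℝ)} with hN
  have hN_null : P N = 0 := by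
    refine measure_union_null (measure_union_null ?_ ?_) ?_
    · exact cdf_level_null P hP_atomless 0
    · exact cdf_level_null P hP_atomless 1
    · exact measure_iUnion_null fun q => cdf_level_null P hP_atomless _
  rw [ae_iff]
  refine measure_mono_null (fun x hx => ?_) hN_null
  by_contra hxN
  apply hx
  simp only [hN, mem_union, mem_iUnion, mem_setOf_eq, not_or, not_exists] at hxN
  obtain ⟨⟨hu0', hu1'⟩, huq⟩ := hxN
  set u := cdf P x with hu
  have hu0 : 0 < u := lt_of_le_of_ne (cdf_nonneg P x) (Ne.symm hu0')
  have hu1 : u < 1 := lt_of_le_of_ne (cdf_le_one P x) hu1'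
  -- Step A : u ≤ cdf Q (T x)
  have hstepA : u ≤ cdf Q (T x) := by
    have hsub : Iic x ⊆ T ⁻¹' (Iic (T x)) := fun y hy => hT_mono hy
    have hle : P (Iic x) ≤ Q (Iic (T x)) := by
      rw [← hT_push, Measure.map_apply hT_meas measurableSet_Iic]
      exact measure_mono hsub
    rw [← ofReal_cdf P x, ← ofReal_cdf Q (T x)] at hle
    exact (ENNReal.ofReal_le_ofReal_iff (cdf_nonneg Q (T x))).1 hle
  -- the set defining the quantile
  set S : Set ℝ := {y | u ≤ cdf Q y} with hS
  have hSne : S.Nonempty := by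
    have : ∀ᶠ y in atTop, u < cdf Q y := (tendsto_cdf_atTop Q).eventually (lt_mem_nhds hu1)
    obtain ⟨y, hy⟩ := this.exists
    exact ⟨y, hy.le⟩
  have hSbdd : BddBelow S := by
    have : ∀ᶠ y in atBot, cdf Q y < u := (tendsto_cdf_atBot Q).eventually (gt_mem_nhds hu0)
    obtain ⟨z, hz⟩ := this.exists
    refine ⟨z, fun y hy => ?_⟩
    by_contra hcon
    push_neg at hcon
    have : cdf Q y ≤ cdf Q z := monotone_cdf Q hcon.le
    have : u < u := lt_of_le_of_lt (le_trans hy this) hz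
    exact absurd this (lt_irrefl u)
  -- Step B : quantile Q u ≤ T x
  have hstepB : quantile Q u ≤ T x := csInf_le hSbdd hstepA
  -- Step C : T x ≤ quantile Q u
  have hstepC : T x ≤ quantile Q u := by
    by_contra hcon
    push_neg at hcon
    obtain ⟨q, hq1, hq2⟩ := exists_rat_btwn hcon
    -- (i) u ≤ cdf Q q
    have hi : u ≤ cdf Q (q : ℝ) := by
      obtain ⟨y, hyS, hyq⟩ := exists_lt_of_csInf_lt hSne hq1
      exact le_trans hyS (monotone_cdf Q hyq.le)
    -- (ii) cdf Q q ≤ u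
    have hii : cdf Q (q : ℝ) ≤ u := by
      have hsub : T ⁻¹' (Iic (q : ℝ)) ⊆ Iic x := by
        intro y hy
        by_contra hycon
        simp only [Set.mem_Iic, not_le] at hycon
        exact absurd (le_trans (hT_mono hycon.le) hy) (not_le.2 hq2)
      have hle : Q (Iic (q : ℝ)) ≤ P (Iic x) := by
        rw [← hT_push, Measure.map_apply hT_meas measurableSet_Iic]
        exact measure_mono hsub
      rw [← ofReal_cdf P x, ← ofReal_cdf Q (q : ℝ)] at hle
      exact (ENNReal.ofReal_le_ofReal_iff (cdf_nonneg P x)).1 hle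
    exact huq q (le_antisymm hii hi).symm
  exact le_antisymm hstepC hstepB
end
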